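/- Let f : ℝ → ℝ be differentiable. The gradient of the PCN energy E_N with respect to a hidden activation a^ℓ_i (for 1 ≤ ℓ < L) equals 2[ε^ℓ_i - Σ_j w^ℓ_{ji} ε^{ℓ+1}_j f'(Σ_m w^ℓ_{jm} a^ℓ_m)], and with respect to a^L_i it equals 2ε^L_i. -/

import Mathlib

/-- The predictive coding energy of a PCN. -/
def ENergy (L : ℕ) (n : ℕ → ℕ) (w : ℕ → ℕ → ℕ → ℝ) (f : ℝ → ℝ) (a : ℕ → ℕ → ℝ) : ℝ :=
  ∑ ℓ ∈ Finset.Icc 1 L, ∑ i ∈ Finset.range (n ℓ),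
    (a ℓ i - f (∑ j ∈ Finset.range (n (ℓ - 1)), w (ℓ - 1) i j * a (ℓ - 1) j)) ^ 2

lemma sq_term_deriv (f : ℝ → ℝ) (hf : Differentiable ℝ f) (A S : ℝ → ℝ)
    (c d t₀ A₀ S₀ : ℝ) (hA : HasDerivAt A c t₀) (hS : HasDerivAt S d t₀)
    (hA0 : A t₀ = A₀) (hS0 : S t₀ = S₀) :
    HasDerivAt (fun t => (A t - f (S t)) ^ 2)
      (2 * (A₀ - f S₀) * (c - deriv f S₀ * d)) t₀ := by
  have h1 : HasDerivAt (fun t => A t - f (S t)) (c - deriv f S₀ * d) t₀ := by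
    have hcomp : HasDerivAt (fun t => f (S t)) (deriv f S₀ * d) t₀ := by
      have := ((hf (S t₀)).hasDerivAt).comp t₀ hS
      rwa [hS0] at this
    exact hA.sub hcomp
  have h2 : HasDerivAt (fun t => (A t - f (S t)) ^ 2)
      (((2:ℕ):ℝ) * (A t₀ - f (S t₀)) ^ (2 - 1) * (c - deriv f S₀ * d)) t₀ := h1.fun_pow 2
  rw [hA0, hS0] at h2
  convert h2 using 1
  push_cast
  ring

lemma main_aux (L : ℕ) (n : ℕ → ℕ) (a : ℕ → ℕ → ℝ) (w : ℕ → ℕ → ℕ → ℝ)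
    (f : ℝ → ℝ) (hf : Differentiable ℝ f) (ℓ i : ℕ) (hi : i < n ℓ) :
    HasDerivAt
      (fun t : ℝ => ENergy L n w f (fun k j => if k = ℓ ∧ j = i then t else a k j))
      (∑ ℓ' ∈ Finset.Icc 1 L, ∑ i' ∈ Finset.range (n ℓ'),
        2 * (a ℓ' i' - f (∑ j ∈ Finset.range (n (ℓ' - 1)), w (ℓ' - 1) i' j * a (ℓ' - 1) j)) *
          ((if ℓ' = ℓ ∧ i' = i then (1:ℝ) else 0) -
            deriv f (∑ j ∈ Finset.range (n (ℓ' - 1)), w (ℓ' - 1) i' j * a (ℓ' - 1) j) *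
              (if ℓ' - 1 = ℓ then w ℓ i' i else 0)))
      (a ℓ i) := by
  unfold ENergy
  apply HasDerivAt.fun_sum
  intro ℓ' _
  apply HasDerivAt.fun_sum
  intro i' _
  have hA : HasDerivAt (fun t : ℝ => if ℓ' = ℓ ∧ i' = i then t else a ℓ' i')
      (if ℓ' = ℓ ∧ i' = i then (1:ℝ) else 0) (a ℓ i) := by
    by_cases h : ℓ' = ℓ ∧ i' = i
    · simp only [h, if_true]; exact hasDerivAt_id _
    · simp only [h, if_false]; exact hasDerivAt_const _ _
  have hS : HasDerivAt
      (fun t : ℝ => ∑ j ∈ Finset.range (n (ℓ' - 1)),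
        w (ℓ' - 1) i' j * (if ℓ' - 1 = ℓ ∧ j = i then t else a (ℓ' - 1) j))
      (if ℓ' - 1 = ℓ then w ℓ i' i else 0) (a ℓ i) := by
    have hsum : HasDerivAt
        (fun t : ℝ => ∑ j ∈ Finset.range (n (ℓ' - 1)),
          w (ℓ' - 1) i' j * (if ℓ' - 1 = ℓ ∧ j = i then t else a (ℓ' - 1) j))
        (∑ j ∈ Finset.range (n (ℓ' - 1)),
          w (ℓ' - 1) i' j * (if ℓ' - 1 = ℓ ∧ j = i then (1:ℝ) else 0)) (a ℓ i) := by
      apply HasDerivAt.fun_sum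
      intro j _
      apply HasDerivAt.const_mul
      by_cases h : ℓ' - 1 = ℓ ∧ j = i
      · simp only [h, if_true]; exact hasDerivAt_id _
      · simp only [h, if_false]; exact hasDerivAt_const _ _
    convert hsum using 1
    by_cases h : ℓ' - 1 = ℓ
    · subst h
      simp [mul_ite, Finset.sum_ite_eq' (Finset.range (n (ℓ'-1))) i, Finset.mem_range.mpr, hi]
    · simp [h]
  apply sq_term_deriv f hf _ _ _ _ _ _ _ hA hS
  · by_cases h : ℓ' = ℓ ∧ i' = i
    · simp [h.1, h.2]
    · simp [h]
  · apply Finset.sum_congr rfl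
    intro j _
    by_cases h : ℓ' - 1 = ℓ ∧ j = i
    · simp [h.1, h.2]
    · simp [h]

/-- the partial derivative of E_N with respect to a hidden activation a^ℓ_i
(1 ≤ ℓ < L) is 2[ε^ℓ_i - Σ_j w^ℓ_{ji} ε^{ℓ+1}_j f'(Σ_m w^ℓ_{jm} a^ℓ_m)], and with respect
to an output activation a^L_i it is 2 ε^L_i. -/
theorem pcn_energy_activity_gradient
    (L : ℕ) (n : ℕ → ℕ) (a : ℕ → ℕ → ℝ) (w : ℕ → ℕ → ℕ → ℝ)
    (f : ℝ → ℝ) (hf : Differentiable ℝ f)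
    (ε : ℕ → ℕ → ℝ)
    (hε : ∀ ℓ i, 1 ≤ ℓ →
      ε ℓ i = a ℓ i - f (∑ j ∈ Finset.range (n (ℓ - 1)), w (ℓ - 1) i j * a (ℓ - 1) j)) :
    (∀ ℓ i, 1 ≤ ℓ → ℓ < L → i < n ℓ →
      HasDerivAt
        (fun t : ℝ => ENergy L n w f (fun k j => if k = ℓ ∧ j = i then t else a k j))
        (2 * (ε ℓ i - ∑ j ∈ Finset.range (n (ℓ + 1)),
          w ℓ j i * ε (ℓ + 1) j * deriv f (∑ m ∈ Finset.range (n ℓ), w ℓ j m * a ℓ m)))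
        (a ℓ i)) ∧
    (∀ i, 1 ≤ L → i < n L →
      HasDerivAt
        (fun t : ℝ => ENergy L n w f (fun k j => if k = L ∧ j = i then t else a k j))
        (2 * ε L i) (a L i)) := by
  constructor
  · intro ℓ i h1 h2 hi
    have main := main_aux L n a w f hf ℓ i hi
    convert main using 1
    rw [Finset.sum_congr rfl (fun ℓ' hℓ' => Finset.sum_congr rfl (fun i' _ => by
      rw [← hε ℓ' i' (Finset.mem_Icc.mp hℓ').1]))]
    have hsub : ({ℓ, ℓ + 1} : Finset ℕ) ⊆ Finset.Icc 1 L := by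
      intro x hx
      simp only [Finset.mem_insert, Finset.mem_singleton] at hx
      rcases hx with h | h <;> subst h <;> simp [Finset.mem_Icc] <;> omega
    have hzero : ∀ x ∈ Finset.Icc 1 L, x ∉ ({ℓ, ℓ + 1} : Finset ℕ) →
        (∑ i' ∈ Finset.range (n x),
          2 * ε x i' *
            ((if x = ℓ ∧ i' = i then (1:ℝ) else 0) -
              deriv f (∑ j ∈ Finset.range (n (x - 1)), w (x - 1) i' j * a (x - 1) j) *
                (if x - 1 = ℓ then w ℓ i' i else 0))) = 0 := by
      intro x hx hx'
      simp only [Finset.mem_insert, Finset.mem_singleton, not_or] at hx'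
      have hx1 := (Finset.mem_Icc.mp hx).1
      apply Finset.sum_eq_zero
      intro i' _
      have c1 : ¬(x = ℓ ∧ i' = i) := fun h => hx'.1 h.1
      have c2 : ¬(x - 1 = ℓ) := by omega
      simp [c1, c2]
    rw [← Finset.sum_subset hsub hzero]
    rw [Finset.sum_pair (by omega : ℓ ≠ ℓ + 1)]
    have hgℓ : (∑ i' ∈ Finset.range (n ℓ),
        2 * ε ℓ i' *
          ((if ℓ = ℓ ∧ i' = i then (1:ℝ) else 0) -
            deriv f (∑ j ∈ Finset.range (n (ℓ - 1)), w (ℓ - 1) i' j * a (ℓ - 1) j) *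
              (if ℓ - 1 = ℓ then w ℓ i' i else 0))) = 2 * ε ℓ i := by
      have c2 : ¬(ℓ - 1 = ℓ) := by omega
      simp only [c2, if_false, mul_zero, sub_zero, true_and, mul_ite, mul_one]
      rw [Finset.sum_ite_eq' (Finset.range (n ℓ)) i]
      simp [Finset.mem_range.mpr hi]
    have hgℓ1 : (∑ i' ∈ Finset.range (n (ℓ + 1)),
        2 * ε (ℓ + 1) i' *
          ((if ℓ + 1 = ℓ ∧ i' = i then (1:ℝ) else 0) -
            deriv f (∑ j ∈ Finset.range (n (ℓ + 1 - 1)), w (ℓ + 1 - 1) i' j * a (ℓ + 1 - 1) j) *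
              (if ℓ + 1 - 1 = ℓ then w ℓ i' i else 0)))
        = - ∑ j ∈ Finset.range (n (ℓ + 1)),
            2 * (w ℓ j i * ε (ℓ + 1) j * deriv f (∑ m ∈ Finset.range (n ℓ), w ℓ j m * a ℓ m)) := by
      rw [← Finset.sum_neg_distrib]
      apply Finset.sum_congr rfl
      intro i' _
      have c1 : ¬(ℓ + 1 = ℓ ∧ i' = i) := fun h => absurd h.1 (by omega)
      simp only [c1, if_false, Nat.add_sub_cancel, eq_self_iff_true, if_true]
      ring
    rw [hgℓ, hgℓ1, ← Finset.mul_sum]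
    ring
  · intro i hL hi
    have main := main_aux L n a w f hf L i hi
    convert main using 1
    rw [Finset.sum_eq_single_of_mem L (Finset.mem_Icc.mpr ⟨hL, le_refl L⟩)
      (by
        intro x hx hxL
        have hx1 := (Finset.mem_Icc.mp hx).1
        have hx2 := (Finset.mem_Icc.mp hx).2
        apply Finset.sum_eq_zero
        intro i' _
        have c1 : ¬(x = L ∧ i' = i) := fun h => hxL h.1
        have c2 : ¬(x - 1 = L) := by omega
        simp [c1, c2])]
    have c2 : ¬(L - 1 = L) := by omega
    simp only [c2, if_false, mul_zero, sub_zero, true_and, mul_ite, mul_one]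
    rw [Finset.sum_ite_eq' (Finset.range (n L)) i]
    simp only [Finset.mem_range.mpr hi, if_true]
    rw [hε L i hL]
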